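/- Let n, a, b be non-negative integers with a + b ≤ n and 2a ≤ n, and let 𝒜 ⊆ ([n] choose a) be an intersecting hypergraph (i.e. any two members of 𝒜 have nonempty intersection). Then |∂^b 𝒜| / C(n-1, a+b-1) ≥ |𝒜| / C(n-1, a-1), where ∂^b 𝒜 = {B ∈ ([n] choose a+b) : there exists A ∈ 𝒜 with A ⊆ B} is the b-upper shadow of 𝒜. -/

import Mathlib

set_option linter.unusedSectionVars false
set_option maxHeartbeats 1000000

open Finset

section Infra
variable {n : ℕ} [NeZero n]


def posW (L : ℕ) (s : ZMod n) : Finset (ZMod n) := (range L).image (fun i => s + (i : ℕ))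

def window (σ : ZMod n ≃ Fin n) (L : ℕ) (s : ZMod n) : Finset (Fin n) := (posW L s).image σ

lemma natCast_inj_of_lt {i j : ℕ} (hi : i < n) (hj : j < n) (h : (i : ZMod n) = j) : i = j := by
  have := congrArg ZMod.val h
  rwa [ZMod.val_cast_of_lt hi, ZMod.val_cast_of_lt hj] at this

lemma posW_card {L : ℕ} (hL : L ≤ n) (s : ZMod n) : (posW L s).card = L := by
  rw [posW, card_image_of_injOn, card_range]
  intro i hi j hj h
  simp only [coe_range, Set.mem_Iio] at hi hj
  exact natCast_inj_of_lt (lt_of_lt_of_le hi hL) (lt_of_lt_of_le hj hL) (add_left_cancel h)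

lemma window_card {L : ℕ} (hL : L ≤ n) (σ : ZMod n ≃ Fin n) (s : ZMod n) :
    (window σ L s).card = L := by
  rw [window, card_image_of_injective _ σ.injective, posW_card hL]

lemma window_mem_psc {L : ℕ} (hL : L ≤ n) (σ : ZMod n ≃ Fin n) (s : ZMod n) :
    window σ L s ∈ (univ : Finset (Fin n)).powersetCard L := by
  rw [mem_powersetCard]
  exact ⟨subset_univ _, window_card hL σ s⟩

/-- an equiv of the ambient type mapping B to B' -/
lemma exists_equiv_finset {α : Type*} [Fintype α] [DecidableEq α] (B B' : Finset α)
    (h : B.card = B'.card) : ∃ τ : α ≃ α, ∀ x, x ∈ B ↔ τ x ∈ B' := by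
  have c1 : Fintype.card {x // x ∈ B} = Fintype.card {x // x ∈ B'} := by
    simp [Fintype.card_coe, h]
  have c2 : Fintype.card {x // x ∉ B} = Fintype.card {x // x ∉ B'} := by
    rw [Fintype.card_subtype_compl, Fintype.card_subtype_compl]
    simp [Fintype.card_coe, h]
  let e₁ : {x // x ∈ B} ≃ {x // x ∈ B'} := Fintype.equivOfCardEq c1
  let e₂ : {x // x ∉ B} ≃ {x // x ∉ B'} := Fintype.equivOfCardEq c2
  refine ⟨(Equiv.sumCompl (· ∈ B)).symm.trans ((e₁.sumCongr e₂).trans (Equiv.sumCompl (· ∈ B'))), ?_⟩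
  intro x
  by_cases hx : x ∈ B
  · simp only [Equiv.trans_apply, Equiv.sumCompl_symm_apply_of_pos hx, Equiv.sumCongr_apply,
      Sum.map_inl, Equiv.sumCompl_apply_inl]
    exact ⟨fun _ => (e₁ ⟨x, hx⟩).2, fun _ => hx⟩
  · simp only [Equiv.trans_apply, Equiv.sumCompl_symm_apply_of_neg hx, Equiv.sumCongr_apply,
      Sum.map_inr, Equiv.sumCompl_apply_inr]
    exact ⟨fun h' => absurd h' hx, fun h' => absurd h' (e₂ ⟨x, hx⟩).2⟩

noncomputable def Ncount (L : ℕ) (B : Finset (Fin n)) : ℕ :=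
  ∑ σ : ZMod n ≃ Fin n, ((univ : Finset (ZMod n)).filter (fun s => window σ L s = B)).card

lemma Ncount_const {L : ℕ} (B B' : Finset (Fin n)) (h : B.card = B'.card) :
    Ncount L B = Ncount (n := n) L B' := by
  obtain ⟨τ, hτ⟩ := exists_equiv_finset B B' h
  have key : ∀ (W : Finset (Fin n)), W.image τ = B' ↔ W = B := by
    intro W
    constructor
    · intro hW
      apply eq_of_subset_of_card_le
      · intro x hx
        have : τ x ∈ B' := hW ▸ mem_image_of_mem τ hx
        exact (hτ x).mpr this
      · rw [← hW, card_image_of_injective _ τ.injective] at h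
        omega
    · rintro rfl
      apply eq_of_subset_of_card_le
      · intro y hy
        obtain ⟨x, hx, rfl⟩ := mem_image.mp hy
        exact (hτ x).mp hx
      · rw [card_image_of_injective _ τ.injective]
        omega
  rw [Ncount, Ncount]
  refine Fintype.sum_equiv ((Equiv.refl (ZMod n)).equivCongr τ) _ _ ?_
  intro σ
  congr 1
  apply filter_congr
  intro s _
  have h1 : ((Equiv.refl (ZMod n)).equivCongr τ) σ = σ.trans τ := by
    ext x; simp [Equiv.equivCongr]
  rw [h1]
  have h2 : window (σ.trans τ) L s = (window σ L s).image τ := by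
    simp only [window, image_image]
    rfl
  rw [h2]
  simp [key]

lemma card_equiv_zmod_fin : Fintype.card (ZMod n ≃ Fin n) = n.factorial := by
  rw [Fintype.card_equiv (Fintype.equivOfCardEq (by simp [ZMod.card]))]
  simp [ZMod.card]

lemma Ncount_total {L : ℕ} (hL : L ≤ n) :
    ∑ B ∈ (univ : Finset (Fin n)).powersetCard L, Ncount (n := n) L B = n * n.factorial := by
  unfold Ncount
  rw [Finset.sum_comm]
  have hper : ∀ σ : ZMod n ≃ Fin n,
      ∑ B ∈ (univ : Finset (Fin n)).powersetCard L,
        ((univ : Finset (ZMod n)).filter (fun s => window σ L s = B)).card = n := by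
    intro σ
    have := Finset.card_eq_sum_card_fiberwise
      (s := (univ : Finset (ZMod n))) (t := (univ : Finset (Fin n)).powersetCard L)
      (f := fun s => window σ L s) (fun s _ => window_mem_psc hL σ s)
    rw [← this, card_univ, ZMod.card]
  rw [Finset.sum_congr rfl (fun σ _ => hper σ), Finset.sum_const, smul_eq_mul, card_univ,
    card_equiv_zmod_fin, mul_comm]

lemma Ncount_val {L : ℕ} (hL : L ≤ n) (B : Finset (Fin n)) (hB : B.card = L) :
    Ncount (n := n) L B * n.choose L = n * n.factorial := by
  have h1 : ∑ B' ∈ (univ : Finset (Fin n)).powersetCard L, Ncount (n := n) L B' = n * n.factorial :=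
    Ncount_total hL
  have h2 : ∀ B' ∈ (univ : Finset (Fin n)).powersetCard L, Ncount (n := n) L B' = Ncount (n := n) L B := by
    intro B' hB'
    exact Ncount_const B' B (by rw [(mem_powersetCard.mp hB').2, hB])
  rw [Finset.sum_congr rfl h2, Finset.sum_const, smul_eq_mul, card_powersetCard, card_univ,
    Fintype.card_fin] at h1
  rw [mul_comm]
  exact h1

lemma count_family {L : ℕ} (hL : L ≤ n) (ℬ : Finset (Finset (Fin n)))
    (hcard : ∀ B ∈ ℬ, B.card = L) :
    (∑ σ : ZMod n ≃ Fin n,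
        ((univ : Finset (ZMod n)).filter (fun s => window σ L s ∈ ℬ)).card) * n.choose L
      = ℬ.card * (n * n.factorial) := by
  have per : ∀ σ : ZMod n ≃ Fin n,
      ((univ : Finset (ZMod n)).filter (fun s => window σ L s ∈ ℬ)).card
        = ∑ B ∈ ℬ, ((univ : Finset (ZMod n)).filter (fun s => window σ L s = B)).card := by
    intro σ
    have h1 := Finset.card_eq_sum_card_fiberwise
      (s := (univ : Finset (ZMod n)).filter (fun s => window σ L s ∈ ℬ)) (t := ℬ)
      (f := fun s => window σ L s) (fun s hs => (mem_filter.mp hs).2)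
    rw [h1]
    apply Finset.sum_congr rfl
    intro B hB
    rw [filter_filter]
    congr 1
    apply filter_congr
    intro s _
    constructor
    · exact fun h => h.2
    · exact fun h => ⟨h ▸ hB, h⟩
  calc (∑ σ : ZMod n ≃ Fin n,
        ((univ : Finset (ZMod n)).filter (fun s => window σ L s ∈ ℬ)).card) * n.choose L
      = (∑ σ : ZMod n ≃ Fin n, ∑ B ∈ ℬ,
          ((univ : Finset (ZMod n)).filter (fun s => window σ L s = B)).card) * n.choose L := by
        rw [Finset.sum_congr rfl (fun σ _ => per σ)]
    _ = (∑ B ∈ ℬ, Ncount (n := n) L B) * n.choose L := by rw [Finset.sum_comm]; rfl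
    _ = ∑ B ∈ ℬ, (Ncount (n := n) L B * n.choose L) := by rw [Finset.sum_mul]
    _ = ∑ B ∈ ℬ, (n * n.factorial) := by
        exact Finset.sum_congr rfl (fun B hB => Ncount_val hL B (hcard B hB))
    _ = ℬ.card * (n * n.factorial) := by rw [Finset.sum_const, smul_eq_mul]



lemma natCast_val_self (x : ZMod n) : ((x.val : ℕ) : ZMod n) = x :=
  ZMod.natCast_rightInverse x

lemma katona {a : ℕ} (ha : 1 ≤ a) (h2a : 2 * a ≤ n) (S : Finset (ZMod n))
    (hS : ∀ s ∈ S, ∀ s' ∈ S, ((posW a s) ∩ (posW a s')).Nonempty) : S.card ≤ a := by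
  rcases S.eq_empty_or_nonempty with h | ⟨s₀, hs₀⟩
  · simp [h]
  have han : a ≤ n := by omega
  -- range fact
  have key : ∀ s ∈ S, (s - s₀).val < a ∨ n - a < (s - s₀).val := by
    intro s hs
    obtain ⟨x, hx⟩ := hS s hs s₀ hs₀
    simp only [mem_inter, posW, mem_image, mem_range] at hx
    obtain ⟨⟨i, hi, hxi⟩, j, hj, hxj⟩ := hx
    have hij : s - s₀ = (j : ZMod n) - (i : ZMod n) := by
      have : s + (i:ℕ) = s₀ + (j:ℕ) := by rw [hxi, hxj]
      linear_combination this
    rcases le_or_gt i j with hle | hlt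
    · left
      have : s - s₀ = ((j - i : ℕ) : ZMod n) := by
        rw [hij]; push_cast [hle]; ring
      rw [this, ZMod.val_cast_of_lt (by omega)]; omega
    · right
      have h1 : s - s₀ = -((i - j : ℕ) : ZMod n) := by
        rw [hij]; push_cast [hlt.le]; ring
      have h2 : ((i - j : ℕ) : ZMod n).val = i - j := ZMod.val_cast_of_lt (by omega)
      have h3 : ((i - j : ℕ) : ZMod n) ≠ 0 := by
        intro h0
        rw [h0] at h2; simp at h2; omega
      rw [h1, ZMod.neg_val, if_neg h3, h2]
      omega
  set ψ : ZMod n → ℕ := fun s => if (s - s₀).val < a then (s - s₀).val else (s - s₀).val - (n - a) with hψ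
  have hmaps : ∀ s ∈ S, ψ s ∈ range a := by
    intro s hs
    rcases key s hs with h | h
    · simp [hψ, h]
    · have := ZMod.val_lt (s - s₀)
      simp only [hψ, mem_range]
      split <;> omega
  have hinj : Set.InjOn ψ S := by
    intro s hs s' hs' he
    have hvlt := ZMod.val_lt (s - s₀)
    have hvlt' := ZMod.val_lt (s' - s₀)
    have veq : (s - s₀).val = (s' - s₀).val → s = s' := by
      intro h
      have := ZMod.val_injective n h
      exact sub_left_injective this
    rcases key s hs with h1 | h1 <;> rcases key s' hs' with h2 | h2
    · apply veq; simpa [hψ, h1, h2] using he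
    · -- s close, s' far
      exfalso
      have hd : (s - s₀).val = (s' - s₀).val - (n - a) := by
        simp only [hψ] at he
        rwa [if_pos h1, if_neg (by omega)] at he
      -- s = s' + a
      have hsa : s = s' + (a : ℕ) := by
        have e1 : s = s₀ + ((s - s₀).val : ℕ) := by rw [natCast_val_self]; ring
        have e2 : s' = s₀ + ((s' - s₀).val : ℕ) := by rw [natCast_val_self]; ring
        have : (s' - s₀).val = (s - s₀).val + (n - a) := by omega
        rw [e1, e2, this]
        push_cast [han]
        rw [ZMod.natCast_self]
        ring
      obtain ⟨x, hx⟩ := hS s hs s' hs'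
      simp only [mem_inter, posW, mem_image, mem_range] at hx
      obtain ⟨⟨i, hi, hxi⟩, j, hj, hxj⟩ := hx
      have : ((a + i : ℕ) : ZMod n) = (j : ℕ) := by
        have : s' + ((a:ℕ):ZMod n) + (i:ℕ) = s' + (j:ℕ) := by rw [← hsa, hxi, hxj]
        push_cast at this ⊢
        linear_combination this
      have := congrArg ZMod.val this
      rw [ZMod.val_cast_of_lt (by omega), ZMod.val_cast_of_lt (by omega)] at this
      omega
    · -- symmetric
      exfalso
      have hd : (s' - s₀).val = (s - s₀).val - (n - a) := by
        simp only [hψ] at he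
        rwa [if_pos h2, if_neg (by omega), eq_comm] at he
      have hsa : s' = s + (a : ℕ) := by
        have e1 : s = s₀ + ((s - s₀).val : ℕ) := by rw [natCast_val_self]; ring
        have e2 : s' = s₀ + ((s' - s₀).val : ℕ) := by rw [natCast_val_self]; ring
        have : (s - s₀).val = (s' - s₀).val + (n - a) := by omega
        rw [e1, e2, this]
        push_cast [han]
        rw [ZMod.natCast_self]
        ring
      obtain ⟨x, hx⟩ := hS s' hs' s hs
      simp only [mem_inter, posW, mem_image, mem_range] at hx
      obtain ⟨⟨i, hi, hxi⟩, j, hj, hxj⟩ := hx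
      have : ((a + i : ℕ) : ZMod n) = (j : ℕ) := by
        have : s + ((a:ℕ):ZMod n) + (i:ℕ) = s + (j:ℕ) := by rw [← hsa, hxi, hxj]
        push_cast at this ⊢
        linear_combination this
      have := congrArg ZMod.val this
      rw [ZMod.val_cast_of_lt (by omega), ZMod.val_cast_of_lt (by omega)] at this
      omega
    · apply veq
      simp only [hψ] at he
      rw [if_neg (by omega), if_neg (by omega)] at he
      omega
  have := card_le_card_of_injOn ψ hmaps hinj
  simpa using this



lemma sub_one_inj : Function.Injective (fun x : ZMod n => x - 1) :=
  fun x y h => by simpa using sub_left_inj.mp h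

lemma shift_lemma (T : Finset (ZMod n)) (hT : T.Nonempty) :
    min (T.card + 1) n ≤ (T ∪ T.image (· - 1)).card := by
  set T' := T ∪ T.image (· - 1) with hT'
  have hsub : T ⊆ T' := subset_union_left
  have hsub2 : T.image (· - 1) ⊆ T' := subset_union_right
  rcases lt_or_ge T.card T'.card with h | h
  · exact le_trans (min_le_left _ _) h
  · -- cards equal, T' = T, closed under -1
    have hTT : T' = T := by
      apply (eq_of_subset_of_card_le hsub h).symm
    have hclosed : ∀ t ∈ T, t - 1 ∈ T := by
      intro t ht
      rw [← hTT]
      exact hsub2 (mem_image_of_mem _ ht)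
    have hiter : ∀ m : ℕ, ∀ t ∈ T, t - (m : ℕ) ∈ T := by
      intro m
      induction m with
      | zero => simpa using fun t ht => ht
      | succ k ih =>
        intro t ht
        have := hclosed _ (ih t ht)
        have e : t - ((k:ℕ):ZMod n) - 1 = t - ((k+1 : ℕ) : ZMod n) := by push_cast; ring
        rwa [e] at this
    have huniv : T = univ := by
      obtain ⟨t, ht⟩ := hT
      apply eq_univ_of_forall
      intro x
      have := hiter (t - x).val t ht
      rwa [natCast_val_self, sub_sub_cancel] at this
    have : T.card = n := by rw [huniv, card_univ, ZMod.card]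
    rw [hTT, this]
    omega

lemma expand_lemma (S : Finset (ZMod n)) (hS : S.Nonempty) (b : ℕ) :
    min (S.card + b) n ≤ ((range (b+1)).biUnion (fun u => S.image (fun s => s - ((u:ℕ) : ZMod n)))).card := by
  induction b with
  | zero =>
    have : (range 1).biUnion (fun u => S.image (fun s => s - ((u:ℕ) : ZMod n))) = S := by
      simp
    rw [this]
    have : S.card ≤ n := by
      have h1 := card_le_univ S
      rwa [ZMod.card] at h1
    omega
  | succ b ih =>
    set T := (range (b+1)).biUnion (fun u => S.image (fun s => s - ((u:ℕ) : ZMod n))) with hTdef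
    have hTne : T.Nonempty := by
      obtain ⟨s, hs⟩ := hS
      exact ⟨s - ((0:ℕ):ZMod n), mem_biUnion.mpr ⟨0, by simp, mem_image_of_mem _ hs⟩⟩
    have hstep : (range (b+2)).biUnion (fun u => S.image (fun s => s - ((u:ℕ) : ZMod n))) = T ∪ T.image (· - 1) := by
      ext x
      simp only [hTdef, mem_biUnion, mem_union, mem_image, mem_range]
      constructor
      · rintro ⟨u, hu, s, hs, rfl⟩
        rcases Nat.lt_or_ge u (b+1) with h | h
        · exact Or.inl ⟨u, h, s, hs, rfl⟩
        · have : u = b + 1 := by omega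
          subst this
          refine Or.inr ⟨s - ((b:ℕ):ZMod n), ⟨b, by omega, s, hs, rfl⟩, ?_⟩
          push_cast
          ring
      · rintro (⟨u, hu, s, hs, rfl⟩ | ⟨y, ⟨u, hu, s, hs, rfl⟩, rfl⟩)
        · exact ⟨u, by omega, s, hs, rfl⟩
        · refine ⟨u + 1, by omega, s, hs, ?_⟩
          push_cast
          ring
    rw [hstep]
    have := shift_lemma T hTne
    have h2 := ih
    omega

end Infra

section Main
variable {n : ℕ} [NeZero n]

lemma pointwise_ineq (a b : ℕ) (ha : 1 ≤ a) (hb : 1 ≤ b) (hab : a + b ≤ n) (h2a : 2 * a ≤ n)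
    (𝒜 : Finset (Finset (Fin n)))
    (hunif : ∀ A ∈ 𝒜, A.card = a)
    (hint : ∀ A ∈ 𝒜, ∀ A' ∈ 𝒜, (A ∩ A').Nonempty)
    (σ : ZMod n ≃ Fin n) :
    (a + b) * ((univ : Finset (ZMod n)).filter (fun s => window σ a s ∈ 𝒜)).card
      ≤ a * ((univ : Finset (ZMod n)).filter (fun s => window σ (a+b) s ∈
          ((univ : Finset (Fin n)).powersetCard (a + b)).filter
            fun B => ∃ A ∈ 𝒜, A ⊆ B)).card := by
  set S := (univ : Finset (ZMod n)).filter (fun s => window σ a s ∈ 𝒜) with hSdef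
  rcases S.eq_empty_or_nonempty with hS | hSne
  · simp [hS]
  have hmemS : ∀ s ∈ S, window σ a s ∈ 𝒜 := fun s hs => (mem_filter.mp hs).2
  -- Katona bound
  have hSa : S.card ≤ a := by
    apply katona ha h2a S
    intro s hs s' hs'
    obtain ⟨x, hx⟩ := hint _ (hmemS s hs) _ (hmemS s' hs')
    rw [mem_inter] at hx
    obtain ⟨p, hp, hpx⟩ := mem_image.mp hx.1
    obtain ⟨p', hp', hpx'⟩ := mem_image.mp hx.2
    have : p = p' := σ.injective (hpx.trans hpx'.symm)
    exact ⟨p, mem_inter.mpr ⟨hp, this ▸ hp'⟩⟩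
  set T := (range (b+1)).biUnion (fun u => S.image (fun s => s - ((u:ℕ) : ZMod n))) with hTdef
  have hTsub : T ⊆ (univ : Finset (ZMod n)).filter (fun s => window σ (a+b) s ∈
      ((univ : Finset (Fin n)).powersetCard (a + b)).filter fun B => ∃ A ∈ 𝒜, A ⊆ B) := by
    intro t ht
    rw [hTdef, mem_biUnion] at ht
    obtain ⟨u, hu, ht⟩ := ht
    obtain ⟨s, hs, rfl⟩ := mem_image.mp ht
    rw [mem_range] at hu
    rw [mem_filter]
    refine ⟨mem_univ _, ?_⟩
    rw [mem_filter]
    refine ⟨window_mem_psc hab σ _, window σ a s, hmemS s hs, ?_⟩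
    apply image_subset_image
    intro x hx
    simp only [posW, mem_image, mem_range] at hx ⊢
    obtain ⟨i, hi, rfl⟩ := hx
    refine ⟨u + i, by omega, ?_⟩
    push_cast
    ring
  have hTcard : min (S.card + b) n ≤ T.card := expand_lemma S hSne b
  have hG : T.card ≤ ((univ : Finset (ZMod n)).filter (fun s => window σ (a+b) s ∈
      ((univ : Finset (Fin n)).powersetCard (a + b)).filter fun B => ∃ A ∈ 𝒜, A ⊆ B)).card :=
    card_le_card hTsub
  have hf1 : 1 ≤ S.card := card_pos.mpr hSne
  rcases le_or_gt (S.card + b) n with h | h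
  · rw [min_eq_left h] at hTcard
    nlinarith
  · rw [min_eq_right (by omega)] at hTcard
    nlinarith

end Main

/-- Wang's local LYM inequality for intersecting families. -/
theorem local_LYM_intersecting (n a b : ℕ) (hab : a + b ≤ n) (h2a : 2 * a ≤ n)
    (𝒜 : Finset (Finset (Fin n)))
    (hunif : ∀ A ∈ 𝒜, A.card = a)
    (hint : ∀ A ∈ 𝒜, ∀ A' ∈ 𝒜, (A ∩ A').Nonempty) :
    (𝒜.card : ℝ) / ((n - 1).choose (a - 1)) ≤
      ((((Finset.univ : Finset (Fin n)).powersetCard (a + b)).filter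
          fun B => ∃ A ∈ 𝒜, A ⊆ B).card : ℝ) / ((n - 1).choose (a + b - 1)) := by
  classical
  -- trivial case a = 0
  rcases Nat.eq_zero_or_pos a with rfl | ha
  · have hA : 𝒜 = ∅ := by
      rcases 𝒜.eq_empty_or_nonempty with h | ⟨A, hA⟩
      · exact h
      · exfalso
        obtain ⟨x, hx⟩ := hint A hA A hA
        have : A = ∅ := card_eq_zero.mp (hunif A hA)
        rw [this] at hx
        simp at hx
    rw [hA, card_empty]
    simp only [Nat.cast_zero, zero_div]
    positivity
  -- trivial case b = 0
  rcases Nat.eq_zero_or_pos b with rfl | hb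
  · have hfam : (((Finset.univ : Finset (Fin n)).powersetCard (a + 0)).filter
        fun B => ∃ A ∈ 𝒜, A ⊆ B) = 𝒜 := by
      ext B
      simp only [mem_filter, mem_powersetCard, Nat.add_zero]
      constructor
      · rintro ⟨⟨-, hcard⟩, A, hA, hAB⟩
        have : A = B := eq_of_subset_of_card_le hAB (by rw [hunif A hA, hcard])
        exact this ▸ hA
      · intro hB
        exact ⟨⟨subset_univ _, hunif B hB⟩, B, hB, Subset.rfl⟩
    rw [hfam]
    norm_num
  -- main case
  have hn : n ≠ 0 := by omega
  haveI : NeZero n := ⟨hn⟩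
  set D := (((Finset.univ : Finset (Fin n)).powersetCard (a + b)).filter
      fun B => ∃ A ∈ 𝒜, A ⊆ B) with hDdef
  have c1 := count_family (n := n) (by omega : a ≤ n) 𝒜 hunif
  have c2 := count_family (n := n) hab D
    (fun B hB => (mem_powersetCard.mp (mem_filter.mp hB).1).2)
  have hsum : (a + b) * (∑ σ : ZMod n ≃ Fin n,
        ((univ : Finset (ZMod n)).filter (fun s => window σ a s ∈ 𝒜)).card)
      ≤ a * (∑ σ : ZMod n ≃ Fin n,
        ((univ : Finset (ZMod n)).filter (fun s => window σ (a+b) s ∈ D)).card) := by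
    rw [Finset.mul_sum, Finset.mul_sum]
    apply Finset.sum_le_sum
    intro σ _
    exact pointwise_ineq a b ha hb hab h2a 𝒜 hunif hint σ
  -- binomial identities
  have e1 : n - 1 + 1 = n := by omega
  have ea : a - 1 + 1 = a := by omega
  have eab : a + b - 1 + 1 = a + b := by omega
  have i1 : a * n.choose a = n * (n-1).choose (a-1) := by
    have h := Nat.add_one_mul_choose_eq (n-1) (a-1)
    simp only [Nat.succ_eq_add_one, e1, ea] at h
    rw [mul_comm]
    exact h.symm ▸ (by ring)
  have i2 : (a+b) * n.choose (a+b) = n * (n-1).choose (a+b-1) := by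
    have h := Nat.add_one_mul_choose_eq (n-1) (a+b-1)
    simp only [Nat.succ_eq_add_one, e1, eab] at h
    rw [mul_comm]
    exact h.symm ▸ (by ring)
  -- natural-number inequality
  have key : 𝒜.card * (n-1).choose (a+b-1) ≤ D.card * (n-1).choose (a-1) := by
    have hM : 0 < n * n.factorial * n := by
      have := Nat.factorial_pos n
      positivity
    apply Nat.le_of_mul_le_mul_right _ hM
    set F := ∑ σ : ZMod n ≃ Fin n,
        ((univ : Finset (ZMod n)).filter (fun s => window σ a s ∈ 𝒜)).card with hF
    set G := ∑ σ : ZMod n ≃ Fin n,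
        ((univ : Finset (ZMod n)).filter (fun s => window σ (a+b) s ∈ D)).card with hG
    calc 𝒜.card * (n-1).choose (a+b-1) * (n * n.factorial * n)
        = (𝒜.card * (n * n.factorial)) * (n * (n-1).choose (a+b-1)) := by ring
      _ = (F * n.choose a) * ((a+b) * n.choose (a+b)) := by rw [c1, i2]
      _ = ((a+b) * F) * (n.choose a * n.choose (a+b)) := by ring
      _ ≤ (a * G) * (n.choose a * n.choose (a+b)) :=
          Nat.mul_le_mul_right _ hsum
      _ = (G * n.choose (a+b)) * (a * n.choose a) := by ring
      _ = (D.card * (n * n.factorial)) * (n * (n-1).choose (a-1)) := by rw [c2, i1]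
      _ = D.card * (n-1).choose (a-1) * (n * n.factorial * n) := by ring
  -- convert to reals
  have p1 : (0:ℝ) < (n-1).choose (a-1) := by
    exact_mod_cast Nat.cast_pos.mpr (Nat.choose_pos (by omega))
  have p2 : (0:ℝ) < (n-1).choose (a+b-1) := by
    exact_mod_cast Nat.cast_pos.mpr (Nat.choose_pos (by omega))
  rw [div_le_div_iff₀ p1 p2]
  exact_mod_cast key
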